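/- Let F be a cumulative distribution function with hazard rate h on [t₀,∞). Assume h is regularly varying of negative index and that liminf_{t→∞} t·h(t)/log t > 0 (possibly infinite). Then for every nonnegative integer k, F̄(t/2)² / ( h(t)^k · F̄(t) ) → 0 as t → ∞. -/

import Mathlib

open MeasureTheory Filter Set

noncomputable section

/-- `h` is a hazard rate for the upper tail of `F` on `[t₀, ∞)`:
`F̄(t₀) > 0`, `h` is nonnegative and locally integrable on `[t₀, ∞)`, and
`F̄(t) = F̄(t₀) · exp(−∫_{t₀}^t h(u) du)` for all `t ≥ t₀`. -/
def HasHazardRate (F h : ℝ → ℝ) (t₀ : ℝ) : Prop :=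
  0 < 1 - F t₀ ∧ (∀ t, t₀ ≤ t → 0 ≤ h t) ∧
    MeasureTheory.LocallyIntegrableOn h (Set.Ici t₀) ∧
    ∀ t, t₀ ≤ t → 1 - F t = (1 - F t₀) * Real.exp (-(∫ u in t₀..t, h u))

/-- `g`, positive on a neighborhood of `∞`, is regularly varying of index `ρ`:
for every `a > 0`, `g(at)/g(t) → a^ρ` as `t → ∞`. -/
def RegularlyVarying (g : ℝ → ℝ) (ρ : ℝ) : Prop :=
  (∀ᶠ t in Filter.atTop, 0 < g t) ∧
    ∀ a : ℝ, 0 < a →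
      Filter.Tendsto (fun t => g (a * t) / g t) Filter.atTop (nhds (a ^ ρ))

/-- `g` is smoothly varying of index `α` and order `m`: `g` is `m` times continuously
differentiable on a neighborhood of `∞` and `g^(m)` is regularly varying of index `α − m`. -/
def SmoothlyVarying (g : ℝ → ℝ) (α : ℝ) (m : ℕ) : Prop :=
  (∃ T : ℝ, ContDiffOn ℝ (m : ℕ∞) g (Set.Ici T)) ∧
    RegularlyVarying (iteratedDeriv m g) (α - m)

/-- Condition (BasicH): `h` is regularly varying of some index, `t·h(t) → ∞`
and `h(t) → 0` as `t → ∞`. -/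
def BasicH (h : ℝ → ℝ) : Prop :=
  (∃ ρ : ℝ, RegularlyVarying h ρ) ∧
    Filter.Tendsto (fun t => t * h t) Filter.atTop Filter.atTop ∧
    Filter.Tendsto h Filter.atTop (nhds 0)

/-- `F` is a cumulative distribution function on `ℝ`. -/
def IsCDF (F : ℝ → ℝ) : Prop :=
  Monotone F ∧ (∀ x, ContinuousWithinAt F (Set.Ici x) x) ∧
    Filter.Tendsto F Filter.atBot (nhds 0) ∧ Filter.Tendsto F Filter.atTop (nhds 1)

lemma aux_log_integral (a b : ℝ) (ha : 0 < a) (hab : a ≤ b) :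
    ∫ u in a..b, Real.log u / u = (Real.log b)^2/2 - (Real.log a)^2/2 := by
  have hb : 0 < b := lt_of_lt_of_le ha hab
  have hsub : Set.uIcc a b ⊆ Set.Ioi 0 := by
    rw [Set.uIcc_of_le hab]
    exact fun x hx => lt_of_lt_of_le ha hx.1
  have hcont : ContinuousOn (fun u => Real.log u / u) (Set.uIcc a b) := by
    apply ContinuousOn.div
    · exact Real.continuousOn_log.mono (fun x hx => ne_of_gt (hsub hx))
    · exact continuousOn_id
    · exact fun x hx => ne_of_gt (hsub hx)
  have := intervalIntegral.integral_eq_sub_of_hasDerivAt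
    (f := fun u => (Real.log u)^2/2) (f' := fun u => Real.log u / u)
    (a := a) (b := b) ?_ (hcont.intervalIntegrable)
  · rw [this]
  · intro x hx
    have hx0 : 0 < x := hsub hx
    have h1 : HasDerivAt Real.log x⁻¹ x := Real.hasDerivAt_log (ne_of_gt hx0)
    have h2 : HasDerivAt (fun u => (Real.log u)^2) (2 * Real.log x ^ 1 * x⁻¹) x := by
      exact (h1.pow 2).congr_deriv (by push_cast; ring)
    have h3 := h2.div_const 2
    exact h3.congr_deriv (by beta_reduce; ring)

set_option maxHeartbeats 1000000 in
theorem stmt_12' (F h : ℝ → ℝ) (t₀ ρ : ℝ)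
    (hh : (0 < 1 - F t₀ ∧ (∀ t, t₀ ≤ t → 0 ≤ h t) ∧
    MeasureTheory.LocallyIntegrableOn h (Set.Ici t₀) ∧
    ∀ t, t₀ ≤ t → 1 - F t = (1 - F t₀) * Real.exp (-(∫ u in t₀..t, h u))))
    (hρ : ρ < 0)
    (hrv : (∀ᶠ t in Filter.atTop, 0 < h t) ∧
    ∀ a : ℝ, 0 < a →
      Filter.Tendsto (fun t => h (a * t) / h t) Filter.atTop (nhds (a ^ ρ)))
    (hliminf : ∃ ε : ℝ, 0 < ε ∧ ∀ᶠ t in Filter.atTop, ε ≤ t * h t / Real.log t) :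
    ∀ k : ℕ,
      Filter.Tendsto (fun t => (1 - F (t / 2)) ^ 2 / (h t ^ k * (1 - F t)))
        Filter.atTop (nhds 0) := by
  obtain ⟨hF0, hpos, hloc, hexp⟩ := hh
  obtain ⟨ε, hε, hevε⟩ := hliminf
  intro k
  set q : ℝ := ((2:ℝ) ^ ρ + 1) / 2 with hq_def
  have h2ρpos : (0:ℝ) < (2:ℝ) ^ ρ := Real.rpow_pos_of_pos two_pos ρ
  have h2ρlt : (2:ℝ) ^ ρ < 1 := Real.rpow_lt_one_of_one_lt_of_neg one_lt_two hρ
  have hqpos : 0 < q := by rw [hq_def]; linarith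
  have hq1 : q < 1 := by rw [hq_def]; linarith
  have h2ρq : (2:ℝ) ^ ρ < q := by rw [hq_def]; linarith
  -- choose T
  obtain ⟨T, hT3, hTt₀, hT⟩ : ∃ T : ℝ, 3 ≤ T ∧ t₀ ≤ T ∧ ∀ u, T ≤ u →
      0 < h u ∧ h (2*u) ≤ q * h u ∧ ε * Real.log u / u ≤ h u := by
    have e2 : ∀ᶠ u in atTop, h (2*u) / h u < q :=
      (hrv.2 2 two_pos).eventually_lt_const h2ρq
    have e3 : ∀ᶠ u in atTop, 0 < h (2*u) := by
      have : Tendsto (fun u : ℝ => 2*u) atTop atTop :=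
        (tendsto_id.const_mul_atTop two_pos)
      exact this.eventually hrv.1
    obtain ⟨T₁, hT₁⟩ := eventually_atTop.mp (((hrv.1.and e2).and e3).and hevε)
    refine ⟨max T₁ (max 3 (max t₀ 3)), ?_, ?_, ?_⟩
    · exact le_trans (le_max_left 3 _) (le_max_right _ _)
    · exact le_trans (le_max_left t₀ 3) (le_trans (le_max_right 3 _) (le_max_right _ _))
    · intro u hu
      have huT₁ : T₁ ≤ u := le_trans (le_max_left _ _) hu
      have hu3 : (3:ℝ) ≤ u := le_trans (le_trans (le_max_left 3 _) (le_max_right _ _)) hu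
      obtain ⟨⟨⟨hp, hratio⟩, hp2⟩, hliminf'⟩ := hT₁ u huT₁
      refine ⟨hp, ?_, ?_⟩
      · have := (div_lt_iff₀ hp).mp hratio
        linarith
      · have hlogpos : 0 < Real.log u := Real.log_pos (by linarith)
        have hupos : (0:ℝ) < u := by linarith
        rw [div_le_iff₀ hupos]
        calc ε * Real.log u ≤ (u * h u / Real.log u) * Real.log u := by
              apply mul_le_mul_of_nonneg_right hliminf' hlogpos.le
          _ = u * h u := by field_simp
          _ = h u * u := by ring
  have hTpos : (0:ℝ) < T := by linarith
  set H : ℝ → ℝ := fun t => ∫ u in t₀..t, h u with hH_def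
  set A : ℝ → ℝ := fun t => ∫ u in (t/2)..t, h u with hA_def
  -- integrability
  have hInt : ∀ a b : ℝ, t₀ ≤ a → a ≤ b → IntervalIntegrable h MeasureTheory.volume a b := by
    intro a b ha hab
    rw [intervalIntegrable_iff]
    apply (hloc.integrableOn_compact_subset (t := Set.Icc a b) ?_ isCompact_Icc).mono_set
    · rw [Set.uIoc_of_le hab]; exact Set.Ioc_subset_Icc_self
    · exact fun x hx => le_trans ha hx.1
  -- H additivity
  have hadd : ∀ a b : ℝ, t₀ ≤ a → a ≤ b → H b = H a + ∫ u in a..b, h u := by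
    intro a b ha hab
    rw [hH_def]
    exact (intervalIntegral.integral_add_adjacent_intervals
      (hInt t₀ a le_rfl ha) (hInt a b ha hab)).symm
  have hnn : ∀ a b : ℝ, t₀ ≤ a → a ≤ b → 0 ≤ ∫ u in a..b, h u := by
    intro a b ha hab
    exact intervalIntegral.integral_nonneg hab (fun u hu => hpos u (le_trans ha hu.1))
  have hHmono : ∀ a b : ℝ, t₀ ≤ a → a ≤ b → H a ≤ H b := by
    intro a b ha hab
    rw [hadd a b ha hab]
    have := hnn a b ha hab
    linarith
  have hH0 : H t₀ = 0 := by simp [hH_def]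
  have hHnn : ∀ a, t₀ ≤ a → 0 ≤ H a := by
    intro a ha; rw [← hH0]; exact hHmono t₀ a le_rfl ha
  -- step 3 : A(2s) ≤ 2q A(s)
  have hA2 : ∀ s : ℝ, 2*T ≤ s → A (2*s) ≤ 2*q*A s := by
    intro s hs
    have hs0 : 0 < s := by linarith
    have hsT : T ≤ s/2 := by linarith
    have ht₀s : t₀ ≤ s/2 := le_trans hTt₀ hsT
    have ht₀s' : t₀ ≤ s := by linarith
    have hint1 : IntervalIntegrable h MeasureTheory.volume s (2*s) :=
      hInt s (2*s) ht₀s' (by linarith)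
    have hint2 : IntervalIntegrable (fun u => h (2*u)) MeasureTheory.volume (s/2) s := by
      have := hint1.comp_mul_left (c := 2)
      have e1 : s/2 = s/(2:ℝ) := rfl
      have e2 : (2*s)/(2:ℝ) = s := by ring
      rwa [e2] at this
    have hint3 : IntervalIntegrable (fun u => q * h u) MeasureTheory.volume (s/2) s :=
      (hInt (s/2) s ht₀s (by linarith)).const_mul q
    have hmono : ∫ u in (s/2)..s, h (2*u) ≤ ∫ u in (s/2)..s, q * h u := by
      apply intervalIntegral.integral_mono_on (by linarith) hint2 hint3
      intro u hu
      exact (hT u (le_trans hsT hu.1)).2.1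
    have hcomp : ∫ u in (s/2)..s, h (2*u) = (2:ℝ)⁻¹ • ∫ v in (2*(s/2))..(2*s), h v := by
      exact intervalIntegral.integral_comp_mul_left (fun v => h v) two_ne_zero
    have e3 : 2*(s/2) = s := by ring
    rw [e3] at hcomp
    have hAs : A (2*s) = ∫ v in s..(2*s), h v := by
      rw [hA_def]
      simp only
      congr 1
      ring
    have hqint : ∫ u in (s/2)..s, q * h u = q * A s := by
      rw [hA_def]
      simp only
      exact intervalIntegral.integral_const_mul q h
    rw [hAs]
    have : (2:ℝ)⁻¹ * ∫ v in s..(2*s), h v ≤ q * A s := by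
      rw [smul_eq_mul] at hcomp
      rw [← hcomp, ← hqint]
      exact hmono
    linarith
  -- key induction
  set C₀ : ℝ := H (4*T) with hC₀_def
  set γ : ℝ := 2*(1-q) with hγ_def
  have hγpos : 0 < γ := by rw [hγ_def]; linarith
  have hbase : ∀ t : ℝ, 2*T ≤ t → t ≤ 4*T → -C₀ + γ * (H (t/2) - C₀) ≤ H (t/2) - A t := by
    intro t h1 h2
    have hTt2 : T ≤ t/2 := by linarith
    have ht₀2 : t₀ ≤ t/2 := le_trans hTt₀ hTt2
    have ht₀t : t₀ ≤ t := by linarith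
    have hAeq : H t = H (t/2) + A t := hadd (t/2) t ht₀2 (by linarith)
    have h3 : H t ≤ C₀ := hHmono t (4*T) ht₀t h2
    have h4 : 0 ≤ H (t/2) := hHnn _ ht₀2
    have h5 : H (t/2) ≤ C₀ := hHmono _ _ ht₀2 (by linarith)
    have h6 : γ * (H (t/2) - C₀) ≤ 0 := mul_nonpos_of_nonneg_of_nonpos hγpos.le (by linarith)
    linarith
  have hkey : ∀ n : ℕ, ∀ t : ℝ, 2*T ≤ t → t ≤ 2^n * (4*T) →
      -C₀ + γ * (H (t/2) - C₀) ≤ H (t/2) - A t := by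
    intro n
    induction n with
    | zero => intro t h1 h2; exact hbase t h1 (by simpa using h2)
    | succ n ih =>
      intro t h1 h2
      by_cases hc : t ≤ 4*T
      · exact hbase t h1 hc
      push_neg at hc
      have h1' : 2*T ≤ t/2 := by linarith
      have h2' : t/2 ≤ 2^n * (4*T) := by
        have e : (2:ℝ)^(n+1) = 2 * 2^n := by ring
        rw [e] at h2; linarith
      have ih' := ih (t/2) h1' h2'
      have hA2' : A t ≤ 2*q*A (t/2) := by
        have := hA2 (t/2) h1'
        have e : 2*(t/2) = t := by ring
        rwa [e] at this
      have heq : H (t/2) = H (t/2/2) + A (t/2) :=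
        hadd (t/2/2) (t/2) (by linarith) (by linarith)
      have r1 : γ * (H (t/2) - C₀) = γ * (H (t/2/2) - C₀) + (2*A (t/2) - 2*q*A (t/2)) := by
        rw [hγ_def, heq]; ring
      linarith [ih', hA2', r1]
  have hkeyAll : ∀ t : ℝ, 2*T ≤ t → γ * H (t/2) - (C₀ + γ*C₀) ≤ H (t/2) - A t := by
    intro t ht
    obtain ⟨n, hn⟩ := pow_unbounded_of_one_lt t (one_lt_two (α := ℝ))
    have h4T : (1:ℝ) ≤ 4*T := by linarith
    have hle : t ≤ 2^n * (4*T) :=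
      le_trans hn.le (le_mul_of_one_le_right (by positivity) h4T)
    have := hkey n t ht hle
    linarith
  -- log-squared lower bound
  have hHlog : ∀ t : ℝ, 2*T ≤ t → ε/2 * ((Real.log (t/2))^2 - (Real.log T)^2) ≤ H (t/2) := by
    intro t ht
    have hTt2 : T ≤ t/2 := by linarith
    have hHsplit : H (t/2) = H T + ∫ u in T..(t/2), h u := hadd T (t/2) hTt₀ hTt2
    have hc : ContinuousOn (fun u : ℝ => ε * (Real.log u / u)) (Set.uIcc T (t/2)) := by
      apply ContinuousOn.mul continuousOn_const
      have hne : ∀ x ∈ Set.uIcc T (t/2), x ≠ 0 := by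
        rw [Set.uIcc_of_le hTt2]
        intro x hx
        exact ne_of_gt (lt_of_lt_of_le hTpos hx.1)
      exact ContinuousOn.div (Real.continuousOn_log.mono hne) continuousOn_id hne
    have h1 : ∫ u in T..(t/2), ε * (Real.log u / u) ≤ ∫ u in T..(t/2), h u := by
      apply intervalIntegral.integral_mono_on hTt2 hc.intervalIntegrable
        (hInt T (t/2) hTt₀ hTt2)
      intro u hu
      have h3 := (hT u hu.1).2.2
      rw [mul_div_assoc] at h3
      exact h3
    have h2 : ∫ u in T..(t/2), ε * (Real.log u / u)
        = ε/2 * ((Real.log (t/2))^2 - (Real.log T)^2) := by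
      rw [intervalIntegral.integral_const_mul, aux_log_integral T (t/2) hTpos hTt2]; ring
    have h3 : 0 ≤ H T := hHnn T hTt₀
    linarith [h1, hHsplit]
  -- setup final constants
  set F₀ : ℝ := 1 - F t₀ with hF₀_def
  set c₂ : ℝ := γ * (ε/2) with hc₂_def
  have hc₂pos : 0 < c₂ := by rw [hc₂_def]; exact mul_pos hγpos (by linarith)
  set C : ℝ := (C₀ + γ*C₀) + c₂*(Real.log T)^2 + k * Real.log 2 with hC_def
  -- eventual equality
  have heqv : ∀ t : ℝ, 2*T ≤ t → (1 - F (t/2))^2 / (h t ^ k * (1 - F t))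
      = F₀ * Real.exp (H t - 2*H (t/2) - k * Real.log (h t)) := by
    intro t ht
    have ht2 : t₀ ≤ t/2 := by linarith
    have htt : t₀ ≤ t := by linarith
    have hht : 0 < h t := (hT t (by linarith)).1
    have e2 : 1 - F (t/2) = F₀ * Real.exp (-(H (t/2))) := by
      simp only [hH_def]; exact hexp (t/2) ht2
    have e3 : 1 - F t = F₀ * Real.exp (-(H t)) := by
      simp only [hH_def]; exact hexp t htt
    have e4 : h t ^ k = Real.exp (k * Real.log (h t)) := by
      rw [Real.exp_nat_mul, Real.exp_log hht]
    rw [e2, e3, e4]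
    have hF₀pos : 0 < F₀ := hF0
    rw [div_eq_iff (by positivity)]
    rw [show (F₀ * Real.exp (-(H (t/2))))^2
        = F₀^2 * Real.exp (-(H (t/2)) + -(H (t/2))) from by rw [Real.exp_add]; ring]
    rw [show F₀ * Real.exp (H t - 2*H (t/2) - k * Real.log (h t))
          * (Real.exp (k * Real.log (h t)) * (F₀ * Real.exp (-(H t))))
        = F₀^2 * Real.exp ((H t - 2*H (t/2) - k * Real.log (h t))
            + (k * Real.log (h t) + -(H t))) from by
      rw [Real.exp_add, Real.exp_add]; ring]
    congr 1
    ring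
  -- exponent bound
  have hEbound : ∀ᶠ t in atTop, H t - 2*H (t/2) - k * Real.log (h t) ≤
      -c₂ * (Real.log (t/2))^2 + k * Real.log (t/2) + C := by
    filter_upwards [eventually_ge_atTop (max (2*T) (Real.exp (1/ε)))] with t ht
    have ht2T : 2*T ≤ t := le_trans (le_max_left _ _) ht
    have htexp : Real.exp (1/ε) ≤ t := le_trans (le_max_right _ _) ht
    have ht0 : 0 < t := by linarith
    have hht : 0 < h t := (hT t (by linarith)).1
    have hsplit : H t = H (t/2) + A t := hadd (t/2) t (by linarith) (by linarith)
    have hk1 := hkeyAll t ht2T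
    have hk2 := hHlog t ht2T
    have hloght : 1/ε ≤ Real.log t := by
      calc 1/ε = Real.log (Real.exp (1/ε)) := (Real.log_exp _).symm
        _ ≤ Real.log t := Real.log_le_log (Real.exp_pos _) htexp
    have h1ε : 1 ≤ ε * Real.log t := by
      have := mul_le_mul_of_nonneg_left hloght hε.le
      rw [mul_one_div, div_self (ne_of_gt hε)] at this
      linarith
    have hht1 : 1/t ≤ h t := by
      have h3 := (hT t (by linarith)).2.2
      have h4 : (1:ℝ)/t ≤ ε * Real.log t / t := by gcongr
      linarith
    have hlogh : -Real.log (h t) ≤ Real.log t := by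
      have h5 : Real.log (1/t) ≤ Real.log (h t) := Real.log_le_log (by positivity) hht1
      rw [Real.log_div one_ne_zero (ne_of_gt ht0), Real.log_one] at h5
      linarith
    have hklogh : -((k:ℝ) * Real.log (h t)) ≤ (k:ℝ) * Real.log t := by
      have hk0 : (0:ℝ) ≤ (k:ℝ) := Nat.cast_nonneg k
      nlinarith [hlogh]
    have hlogt : Real.log t = Real.log (t/2) + Real.log 2 := by
      rw [← Real.log_mul (by positivity) two_ne_zero]
      congr 1
      ring
    have hk2' : γ * (ε/2 * ((Real.log (t/2))^2 - (Real.log T)^2)) ≤ γ * H (t/2) :=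
      mul_le_mul_of_nonneg_left hk2 hγpos.le
    have expand : γ * (ε/2 * ((Real.log (t/2))^2 - (Real.log T)^2))
        = c₂*(Real.log (t/2))^2 - c₂*(Real.log T)^2 := by rw [hc₂_def]; ring
    have hklog2 : (k:ℝ) * Real.log t = (k:ℝ) * Real.log (t/2) + (k:ℝ) * Real.log 2 := by
      rw [hlogt]; ring
    linarith [hk1, hk2', hklogh, expand, hsplit, hklog2]
  -- polynomial tendsto
  have hpoly : Tendsto (fun L : ℝ => -c₂*L^2 + (k:ℝ)*L + C) atTop atBot := by
    have hmul : Tendsto (fun L : ℝ => c₂*L) atTop atTop :=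
      Tendsto.const_mul_atTop hc₂pos tendsto_id
    have hneg : Tendsto (fun L : ℝ => -(c₂*L)) atTop atBot :=
      tendsto_neg_atTop_atBot.comp hmul
    have h1 : Tendsto (fun L : ℝ => (k:ℝ) + -(c₂*L)) atTop atBot :=
      tendsto_atBot_add_const_left atTop ((k:ℝ)) hneg
    have h2 : Tendsto (fun L : ℝ => L * ((k:ℝ) + -(c₂*L))) atTop atBot :=
      Tendsto.atTop_mul_atBot₀ tendsto_id h1
    have h3 : Tendsto (fun L : ℝ => L * ((k:ℝ) + -(c₂*L)) + C) atTop atBot :=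
      tendsto_atBot_add_const_right atTop C h2
    exact h3.congr (fun L => by ring)
  have hLt : Tendsto (fun t : ℝ => Real.log (t/2)) atTop atTop :=
    Real.tendsto_log_atTop.comp (tendsto_id.atTop_div_const two_pos)
  have hEtend : Tendsto (fun t => H t - 2*H (t/2) - (k:ℝ) * Real.log (h t)) atTop atBot :=
    tendsto_atBot_mono' atTop hEbound ((hpoly.comp hLt).congr (fun t => by simp))
  have hfinal : Tendsto (fun t => F₀ * Real.exp (H t - 2*H (t/2) - (k:ℝ) * Real.log (h t)))
      atTop (nhds 0) := by
    have h1 := Real.tendsto_exp_atBot.comp hEtend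
    have h2 := h1.const_mul F₀
    simpa using h2
  apply Filter.Tendsto.congr' ?_ hfinal
  filter_upwards [eventually_ge_atTop (2*T)] with t ht
  exact (heqv t ht).symm

/-- if `h` is regularly varying of negative index and
`liminf t·h(t)/log t > 0` (possibly infinite), then `F̄(t/2)² = o(h(t)^k F̄(t))` for all `k`. -/
theorem stmt_12 (F h : ℝ → ℝ) (t₀ ρ : ℝ) (hF : IsCDF F)
    (hh : HasHazardRate F h t₀)
    (hρ : ρ < 0) (hrv : RegularlyVarying h ρ)
    (hliminf : ∃ ε : ℝ, 0 < ε ∧ ∀ᶠ t in Filter.atTop, ε ≤ t * h t / Real.log t) :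
    ∀ k : ℕ,
      Filter.Tendsto (fun t => (1 - F (t / 2)) ^ 2 / (h t ^ k * (1 - F t)))
        Filter.atTop (nhds 0) := by
  exact stmt_12' F h t₀ ρ hh hρ hrv hliminf
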